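/- For Model 1 in dimension d = 1, assume P(X_e ≤ −x) = e^{−x²f(x)} for x ≥ M₀ with f positive and increasing, fix δ > 0 with 2δM₀ < ε, and for N large define ε_j = 100ε / (f(2^j)·Σ_{k=−log δ}^N 1/f(2^k)) for j = −log δ,…,N, the index set J = {k ∈ {−log δ,…,N} : 2^k ε_k ≥ M₀}, and the event V_J^N = {∀ j ∈ J, X_e ≤ −2^j ε_j for all e ∈ T_{N−j}}. Then P(V_J^N) ≥ exp{−2^{2N+2} / Σ_{k=−log δ}^N 1/f(2^k)}; in particular, if Σ_k 1/f(2^k) = ∞, then lim_{N→∞} (1/2^{2N}) log P(V_J^N) = 0. -/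

import Mathlib

/-!
The shells `T_k` of edges of Model 1 (`d = 1`): `T_k` is a finite set of edges
with `|T_k| ≤ 2^{2k+1}`, pairwise disjoint; the weights `{X_e}` are i.i.d.
mean-zero with lower tail `P(X_e ≤ -x) = e^{-x² f(x)}` for `x ≥ M₀`.
With `δ = 2^{-l}` (so `log₂ δ = -l`), for `j = l, …, N` set
`ε_j = 100 ε / (f(2^j) Σ_{k=l}^N 1/f(2^k))`,
`J = {j ∈ {l, …, N} : 2^j ε_j ≥ M₀}` and
`V_J^N = {∀ j ∈ J, ∀ e ∈ T_{N-j}, X_e ≤ -2^j ε_j}`.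
-/

open MeasureTheory ProbabilityTheory Filter

namespace Stmt19

/-- `Σ_{k=-log₂ δ}^{N} 1/f(2^k)`, with `-log₂ δ = l`. -/
noncomputable def S (f : ℝ → ℝ) (l N : ℕ) : ℝ :=
  ∑ k ∈ Finset.Icc l N, 1 / f (2 ^ k)

/-- `ε_j = 100 ε / (f(2^j) · Σ_{k=-log₂ δ}^N 1/f(2^k))`. -/
noncomputable def epsj (f : ℝ → ℝ) (ε : ℝ) (l N j : ℕ) : ℝ :=
  100 * ε / (f (2 ^ j) * S f l N)

/-- The event `V_J^N = {∀ j ∈ J, X_e ≤ -2^j ε_j ∀ e ∈ T_{N-j}}`, where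
`J = {j ∈ {-log₂ δ, …, N} : 2^j ε_j ≥ M₀}`. -/
def Vevent {E : Type} (T : ℕ → Finset E) (X : E → Ω → ℝ)
    (f : ℝ → ℝ) (ε M₀ : ℝ) (l N : ℕ) : Set Ω :=
  {ω | ∀ j : ℕ, l ≤ j → j ≤ N → M₀ ≤ 2 ^ j * epsj f ε l N j →
    ∀ e ∈ T (N - j), X e ω ≤ -(2 ^ j * epsj f ε l N j)}

end Stmt19

open Stmt19

/-- display (54) and the ensuing limit.  For Model 1 in
`d = 1` with lower tail `P(X_e ≤ -x) = e^{-x² f(x)}` for `x ≥ M₀` (`f` positive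
increasing), `δ = 2^{-l}` with `2 δ M₀ < ε`, and `ε_j < 1` for all `j` (WLOG):
`P(V_J^N) ≥ exp{-2^{2N+2} / Σ_{k=-log₂ δ}^N 1/f(2^k)}`; in particular, if
`Σ_k 1/f(2^k) = ∞`, then `(1/2^{2N}) log₂ P(V_J^N) → 0` as `N → ∞`. -/
theorem stmt_19
    {Ω : Type} [MeasurableSpace Ω] (P : Measure Ω) [IsProbabilityMeasure P]
    {E : Type} (T : ℕ → Finset E)
    (hcard : ∀ k, (T k).card ≤ 2 ^ (2 * k + 1))
    (hdisj : ∀ k k', k ≠ k' → Disjoint (T k) (T k'))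
    (X : E → Ω → ℝ)
    (hmeas : ∀ e, Measurable (X e))
    (hindep : iIndepFun X P)
    (hident : ∀ e e', Measure.map (X e) P = Measure.map (X e') P)
    (hmean : ∀ e, ∫ ω, X e ω ∂P = 0)
    (M₀ : ℝ) (hM₀ : 0 < M₀)
    (f : ℝ → ℝ) (hfpos : ∀ x, 0 < f x) (hfmono : Monotone f)
    (htail : ∀ e, ∀ x : ℝ, M₀ ≤ x →
      (P {ω | X e ω ≤ -x}).toReal = Real.exp (-(x ^ 2 * f x)))
    (ε δ : ℝ) (hε : 0 < ε)
    (l : ℕ) (hl : 1 ≤ l) (hδ : δ = (2 : ℝ) ^ (-(l : ℤ)))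
    (hδM : 2 * δ * M₀ < ε)
    (hsmall : ∀ N j : ℕ, l ≤ j → j ≤ N → epsj f ε l N j < 1) :
    (∀ N : ℕ, l ≤ N →
        Real.exp (-(2 ^ (2 * N + 2)) / S f l N) ≤
          (P (Vevent T X f ε M₀ l N)).toReal) ∧
      (¬ Summable (fun k : ℕ => 1 / f (2 ^ k)) →
        Tendsto (fun N : ℕ =>
            (1 / (2 : ℝ) ^ (2 * N)) *
              Real.logb 2 ((P (Vevent T X f ε M₀ l N)).toReal))
          atTop (nhds 0)) := by
  -- basic facts
  have hε100 : 100 * ε < 1 := by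
    have h := hsmall l l le_rfl le_rfl
    have hf := hfpos (2 ^ l)
    have hS : S f l l = 1 / f (2 ^ l) := by
      simp [S]
    rw [epsj, hS] at h
    rw [div_lt_one (by positivity), mul_one_div_cancel (ne_of_gt hf)] at h
    exact h
  have hεpos : ∀ N j, 0 < epsj f ε l N j ∨ True := fun _ _ => Or.inr trivial
  -- Part 1
  have part1 : ∀ N : ℕ, l ≤ N →
      Real.exp (-(2 ^ (2 * N + 2)) / S f l N) ≤
        (P (Vevent T X f ε M₀ l N)).toReal := by
    intro N hlN
    have hSpos : 0 < S f l N := by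
      apply Finset.sum_pos
      · intro k _; exact one_div_pos.mpr (hfpos _)
      · exact ⟨l, Finset.mem_Icc.mpr ⟨le_rfl, hlN⟩⟩
    set c : ℕ → ℝ := fun j => 2 ^ j * epsj f ε l N j with hc
    set J' : Finset ℕ := (Finset.Icc l N).filter (fun j => M₀ ≤ c j) with hJ'
    have hJsub : ∀ j ∈ J', l ≤ j ∧ j ≤ N ∧ M₀ ≤ c j := by
      intro j hj
      rw [hJ', Finset.mem_filter, Finset.mem_Icc] at hj
      exact ⟨hj.1.1, hj.1.2, hj.2⟩
    have hTdisj : ∀ j ∈ J', ∀ j' ∈ J', j ≠ j' → Disjoint (T (N - j)) (T (N - j')) := by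
      intro j hj j' hj' hne
      refine hdisj _ _ ?_
      have h1 := (hJsub j hj).2.1
      have h2 := (hJsub j' hj').2.1
      omega
    classical
    set jof : E → ℕ := fun e =>
      if h : ((J'.filter (fun j => e ∈ T (N - j))).Nonempty)
      then (J'.filter (fun j => e ∈ T (N - j))).max' h else 0 with hjofdef
    have hjof : ∀ j ∈ J', ∀ e ∈ T (N - j), jof e = j := by
      intro j hj e he
      have hne : ((J'.filter (fun j => e ∈ T (N - j))).Nonempty) :=
        ⟨j, Finset.mem_filter.mpr ⟨hj, he⟩⟩
      rw [hjofdef]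
      simp only [hne, dif_pos]
      have hmem := (J'.filter (fun j => e ∈ T (N - j))).max'_mem hne
      rw [Finset.mem_filter] at hmem
      by_contra hcon
      have := hTdisj _ hmem.1 j hj hcon
      exact (Finset.disjoint_left.mp this hmem.2) he
    set A : Finset E := J'.biUnion (fun j => T (N - j)) with hA
    -- rewrite the event
    have hV : Vevent T X f ε M₀ l N = ⋂ e ∈ A, {ω | X e ω ≤ -(c (jof e))} := by
      ext ω
      simp only [Vevent, Set.mem_setOf_eq, Set.mem_iInter]
      constructor
      · intro hω e he
        rw [hA, Finset.mem_biUnion] at he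
        obtain ⟨j, hj, hej⟩ := he
        obtain ⟨h1, h2, h3⟩ := hJsub j hj
        rw [hjof j hj e hej]
        exact hω j h1 h2 h3 e hej
      · intro hω j h1 h2 h3 e he
        have hj : j ∈ J' := Finset.mem_filter.mpr ⟨Finset.mem_Icc.mpr ⟨h1, h2⟩, h3⟩
        have heA : e ∈ A := Finset.mem_biUnion.mpr ⟨j, hj, he⟩
        have := hω e heA
        rwa [hjof j hj e he] at this
    -- independence product formula
    have hprod : P (Vevent T X f ε M₀ l N)
        = ∏ e ∈ A, P {ω | X e ω ≤ -(c (jof e))} := by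
      rw [hV]
      exact hindep.meas_biInter
        (fun e _ => ⟨Set.Iic (-(c (jof e))), measurableSet_Iic, rfl⟩)
    have htoReal : (P (Vevent T X f ε M₀ l N)).toReal
        = ∏ e ∈ A, (P {ω | X e ω ≤ -(c (jof e))}).toReal := by
      rw [hprod, ENNReal.toReal_prod]
    -- per-edge facts
    have hfact : ∀ e ∈ A,
        Real.exp (-((c (jof e)) ^ 2 * f (2 ^ (jof e)))) ≤
          (P {ω | X e ω ≤ -(c (jof e))}).toReal := by
      intro e he
      rw [hA, Finset.mem_biUnion] at he
      obtain ⟨j, hj, hej⟩ := he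
      rw [hjof j hj e hej]
      obtain ⟨h1, h2, h3⟩ := hJsub j hj
      rw [htail e (c j) h3]
      apply Real.exp_le_exp.mpr
      rw [neg_le_neg_iff]
      apply mul_le_mul_of_nonneg_left _ (sq_nonneg _)
      apply hfmono
      have hlt := hsmall N j h1 h2
      have : c j ≤ 2 ^ j * 1 := by
        apply mul_le_mul_of_nonneg_left (le_of_lt hlt) (by positivity)
      simpa using this
    have hstep : ∏ e ∈ A, Real.exp (-((c (jof e)) ^ 2 * f (2 ^ (jof e)))) ≤
        (P (Vevent T X f ε M₀ l N)).toReal := by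
      rw [htoReal]
      apply Finset.prod_le_prod
      · intro e _; positivity
      · exact hfact
    rw [← Real.exp_sum] at hstep
    refine le_trans (Real.exp_le_exp.mpr ?_) hstep
    -- bound the sum
    have hsum_biUnion : ∑ e ∈ A, (c (jof e)) ^ 2 * f (2 ^ (jof e))
        = ∑ j ∈ J', ∑ e ∈ T (N - j), (c (jof e)) ^ 2 * f (2 ^ (jof e)) := by
      rw [hA]
      exact Finset.sum_biUnion (fun j hj j' hj' hne =>
        hTdisj j (Finset.mem_coe.mp hj) j' (Finset.mem_coe.mp hj') hne)
    have hterm : ∀ j ∈ Finset.Icc l N,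
        ((T (N - j)).card : ℝ) * ((c j) ^ 2 * f (2 ^ j)) ≤
          2 ^ (2 * N + 1) * (100 * ε) ^ 2 / (S f l N) ^ 2 * (1 / f (2 ^ j)) := by
      intro j hj
      rw [Finset.mem_Icc] at hj
      have hfj := hfpos (2 ^ j)
      have hcardj : ((T (N - j)).card : ℝ) ≤ 2 ^ (2 * (N - j) + 1) := by
        exact_mod_cast hcard (N - j)
      have hcj : (c j) ^ 2 * f (2 ^ j)
          = (2 : ℝ) ^ (2 * j) * ((100 * ε) ^ 2 / (f (2 ^ j) * (S f l N) ^ 2)) := by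
        rw [hc]
        simp only [epsj]
        rw [mul_comm 2 j, pow_mul]
        field_simp
      calc ((T (N - j)).card : ℝ) * ((c j) ^ 2 * f (2 ^ j))
          ≤ 2 ^ (2 * (N - j) + 1) * ((c j) ^ 2 * f (2 ^ j)) := by
            apply mul_le_mul_of_nonneg_right hcardj
            have := le_of_lt (hfpos (2 ^ j))
            positivity
        _ = (2 ^ (2 * (N - j) + 1) * 2 ^ (2 * j)) *
              ((100 * ε) ^ 2 / (f (2 ^ j) * (S f l N) ^ 2)) := by rw [hcj]; ring
        _ = 2 ^ (2 * N + 1) * ((100 * ε) ^ 2 / (f (2 ^ j) * (S f l N) ^ 2)) := by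
            rw [← pow_add]
            congr 2
            omega
        _ = 2 ^ (2 * N + 1) * (100 * ε) ^ 2 / (S f l N) ^ 2 * (1 / f (2 ^ j)) := by
            field_simp
    have hsumle : ∑ e ∈ A, (c (jof e)) ^ 2 * f (2 ^ (jof e)) ≤
        2 ^ (2 * N + 2) / S f l N := by
      rw [hsum_biUnion]
      have h1 : ∑ j ∈ J', ∑ e ∈ T (N - j), (c (jof e)) ^ 2 * f (2 ^ (jof e))
          = ∑ j ∈ J', ((T (N - j)).card : ℝ) * ((c j) ^ 2 * f (2 ^ j)) := by
        apply Finset.sum_congr rfl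
        intro j hj
        rw [Finset.sum_congr rfl (fun e he => by rw [hjof j hj e he])]
        rw [Finset.sum_const, nsmul_eq_mul]
      rw [h1]
      have h2 : ∑ j ∈ J', ((T (N - j)).card : ℝ) * ((c j) ^ 2 * f (2 ^ j)) ≤
          ∑ j ∈ Finset.Icc l N, ((T (N - j)).card : ℝ) * ((c j) ^ 2 * f (2 ^ j)) := by
        apply Finset.sum_le_sum_of_subset_of_nonneg (Finset.filter_subset _ _)
        intro j _ _
        exact mul_nonneg (Nat.cast_nonneg _)
          (mul_nonneg (sq_nonneg _) (le_of_lt (hfpos (2 ^ j))))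
      refine le_trans (le_trans h2 (Finset.sum_le_sum hterm)) ?_
      rw [← Finset.mul_sum]
      have hSdef : ∑ j ∈ Finset.Icc l N, 1 / f (2 ^ j) = S f l N := rfl
      rw [hSdef]
      have heq : 2 ^ (2 * N + 1) * (100 * ε) ^ 2 / (S f l N) ^ 2 * S f l N
          = (2 ^ (2 * N + 1) * (100 * ε) ^ 2) / S f l N := by
        field_simp
      rw [heq, div_le_div_iff_of_pos_right hSpos]
      have h2pos : (0 : ℝ) < 2 ^ (2 * N + 1) := by positivity
      have : (2 : ℝ) ^ (2 * N + 2) = 2 * 2 ^ (2 * N + 1) := by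
        rw [pow_succ]; ring
      have hsq : (100 * ε) ^ 2 ≤ 1 := by nlinarith
      nlinarith
    have hneg : ∑ e ∈ A, -((c (jof e)) ^ 2 * f (2 ^ (jof e)))
        = -∑ e ∈ A, ((c (jof e)) ^ 2 * f (2 ^ (jof e))) := by
      rw [Finset.sum_neg_distrib]
    rw [hneg, neg_div]
    exact neg_le_neg hsumle
  refine ⟨part1, ?_⟩
  intro hNS
  have hlog2 : (0 : ℝ) < Real.log 2 := Real.log_pos (by norm_num)
  have hpos' : ∀ N, l ≤ N → 0 < (P (Vevent T X f ε M₀ l N)).toReal :=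
    fun N hN => lt_of_lt_of_le (Real.exp_pos _) (part1 N hN)
  have hle1 : ∀ N, (P (Vevent T X f ε M₀ l N)).toReal ≤ 1 := by
    intro N
    calc (P (Vevent T X f ε M₀ l N)).toReal ≤ (1 : ENNReal).toReal :=
          ENNReal.toReal_mono (by simp) prob_le_one
      _ = 1 := by simp
  -- the S sums tend to infinity
  have hS_tendsto : Tendsto (fun N => S f l N) atTop atTop := by
    have h0 : ∀ k, 0 ≤ 1 / f ((2 : ℝ) ^ k) := fun k => le_of_lt (one_div_pos.mpr (hfpos _))
    have h1 : Tendsto (fun n => ∑ i ∈ Finset.range n, 1 / f ((2 : ℝ) ^ i)) atTop atTop :=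
      (not_summable_iff_tendsto_nat_atTop_of_nonneg h0).mp hNS
    have h2 : Tendsto (fun N : ℕ => ∑ i ∈ Finset.range (N + 1), 1 / f ((2 : ℝ) ^ i)
        + -(∑ i ∈ Finset.range l, 1 / f ((2 : ℝ) ^ i))) atTop atTop :=
      tendsto_atTop_add_const_right _ _ (h1.comp (tendsto_add_atTop_nat 1))
    apply h2.congr'
    filter_upwards [eventually_ge_atTop l] with N hN
    rw [← sub_eq_add_neg, ← Finset.sum_Ico_eq_sub _ (by omega : l ≤ N + 1)]
    rw [S, ← Finset.Ico_add_one_right_eq_Icc]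
  have hLB : Tendsto (fun N : ℕ => (-4 / Real.log 2) / S f l N) atTop (nhds 0) :=
    Tendsto.div_atTop tendsto_const_nhds hS_tendsto
  set a : ℕ → ℝ := fun N => (1 / (2 : ℝ) ^ (2 * N)) *
      Real.logb 2 ((P (Vevent T X f ε M₀ l N)).toReal) with ha
  have hup : ∀ᶠ N in atTop, a N ≤ 0 := by
    filter_upwards [eventually_ge_atTop l] with N hN
    have hlb : Real.logb 2 ((P (Vevent T X f ε M₀ l N)).toReal) ≤ 0 :=
      Real.logb_nonpos (by norm_num) (le_of_lt (hpos' N hN)) (hle1 N)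
    have : (0 : ℝ) ≤ 1 / (2 : ℝ) ^ (2 * N) := by positivity
    exact mul_nonpos_of_nonneg_of_nonpos this hlb
  have hlow : ∀ᶠ N in atTop, (-4 / Real.log 2) / S f l N ≤ a N := by
    filter_upwards [eventually_ge_atTop l] with N hN
    have hSpos : 0 < S f l N := by
      apply Finset.sum_pos
      · intro k _; exact one_div_pos.mpr (hfpos _)
      · exact ⟨l, Finset.mem_Icc.mpr ⟨le_rfl, hN⟩⟩
    have hlogb : (-(2 ^ (2 * N + 2)) / S f l N) / Real.log 2 ≤
        Real.logb 2 ((P (Vevent T X f ε M₀ l N)).toReal) := by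
      have h1 : Real.logb 2 (Real.exp (-(2 ^ (2 * N + 2)) / S f l N)) ≤
          Real.logb 2 ((P (Vevent T X f ε M₀ l N)).toReal) :=
        Real.logb_le_logb_of_le (by norm_num) (Real.exp_pos _) (part1 N hN)
      rwa [Real.logb, Real.log_exp] at h1
    have hkey : (1 / (2 : ℝ) ^ (2 * N)) * ((-(2 ^ (2 * N + 2)) / S f l N) / Real.log 2)
        = (-4 / Real.log 2) / S f l N := by
      have h4 : (2 : ℝ) ^ (2 * N + 2) = 4 * 2 ^ (2 * N) := by rw [pow_add]; ring
      rw [h4]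
      have h2N : (0 : ℝ) < (2 : ℝ) ^ (2 * N) := by positivity
      field_simp
    rw [ha, ← hkey]
    apply mul_le_mul_of_nonneg_left hlogb (by positivity)
  exact tendsto_of_tendsto_of_tendsto_of_le_of_le' hLB tendsto_const_nhds hlow hup
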